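/- arXiv:2603.14557 — 5 statements merged into one kernel-verified Lean document; each statement's English description precedes it below -/
import Mathlib

section
/- Let v : [1, ∞) → ℝ be concave with v(y) ≥ Hv(y) for all y, where H is the issuance operator with costs κ, κ' ∈ (0,1). Then the right derivative of v at 1 satisfies D⁺v(1) ≤ 1/(1-κ'), and consequently v(y) ≤ v(1) + (y-1)/(1-κ') for all y ≥ 1. -/
/-- If `v` is concave on `[1, ∞)` and dominates the issuance operator, i.e.
`v(y) ≥ v((1-κ)y + (1-κ')ξ + κ) - ξ + κ(y-1)` for every admissible `ξ`, then the right
derivative of `v` at `1` is at most `1/(1-κ')`, and consequently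
`v(y) ≤ v(1) + (y-1)/(1-κ')` for all `y ≥ 1`. -/
theorem right_derivative_bound_at_one
    (κ κ' : ℝ) (hκ : κ ∈ Set.Ioo (0:ℝ) 1) (hκ' : κ' ∈ Set.Ioo (0:ℝ) 1)
    (v : ℝ → ℝ) (hconc : ConcaveOn ℝ (Set.Ici 1) v)
    (hHv : ∀ y, 1 ≤ y → ∀ ξ, κ / (1 - κ') * (y - 1) < ξ →
        v ((1 - κ) * y + (1 - κ') * ξ + κ) - ξ + κ * (y - 1) ≤ v y) :
    (∀ d, HasDerivWithinAt v d (Set.Ici 1) 1 → d ≤ 1 / (1 - κ')) ∧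
      ∀ y, 1 ≤ y → v y ≤ v 1 + (y - 1) / (1 - κ') := by
  obtain ⟨hκ0, hκ1⟩ := hκ
  obtain ⟨hκ'0, hκ'1⟩ := hκ'
  have h1κ' : (0:ℝ) < 1 - κ' := by linarith
  have key : ∀ y, 1 < y → v y ≤ v 1 + (y - 1) / (1 - κ') := by
    intro y hy
    have hξ : 0 < (y - 1) / (1 - κ') := div_pos (by linarith) h1κ'
    have h := hHv 1 le_rfl ((y - 1) / (1 - κ')) (by simpa using hξ)
    have harg : (1 - κ) * 1 + (1 - κ') * ((y - 1) / (1 - κ')) + κ = y := by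
      field_simp
      ring
    rw [harg] at h
    linarith
  constructor
  · intro d hd
    rw [hasDerivWithinAt_iff_tendsto_slope] at hd
    rw [Set.Ici_sdiff_left] at hd
    refine le_of_tendsto hd ?_
    filter_upwards [self_mem_nhdsWithin] with t ht
    have ht1 : 1 < t := ht
    have hb := key t ht1
    rw [slope_def_field, div_le_div_iff₀ (by linarith) h1κ']
    have hb' : (v t - v 1) * (1 - κ') ≤ t - 1 := by
      have := mul_le_mul_of_nonneg_right (by linarith : v t - v 1 ≤ (t - 1) / (1 - κ'))
        h1κ'.le
      rwa [div_mul_cancel₀ _ (ne_of_gt h1κ')] at this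
    linarith
  · intro y hy
    rcases eq_or_lt_of_le hy with h | h
    · simp [← h]
    · exact key y h
end

section
/- Let v : [1, ∞) → ℝ be concave, κ, κ' ∈ (0,1), and suppose y > 1 satisfies 1 < D⁺v(y) ≤ 1/(1-κ'). Then for every ξ > (κ/(1-κ'))(y-1), v((1-κ)y + (1-κ')ξ + κ) - ξ + κ(y-1) ≤ v(y) - (κκ'/(1-κ'))(y-1) < v(y). In particular, Hv(y) < v(y), so y is not in the issuance region. -/
/-- If `v` is concave on `[1, ∞)`, `y > 1`, and the right derivative `d = D⁺v(y)` (a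
supergradient to the right: `v(z) ≤ v(y) + (z-y)d` for `z ≥ y`) satisfies
`1 < d ≤ 1/(1-κ')`, then for every admissible issuance `ξ > (κ/(1-κ'))(y-1)`,
`v((1-κ)y + (1-κ')ξ + κ) - ξ + κ(y-1) ≤ v(y) - (κκ'/(1-κ'))(y-1) < v(y)`;
in particular `y` is not in the issuance region. -/
theorem no_issuance_when_slope_moderate
    (κ κ' : ℝ) (hκ : κ ∈ Set.Ioo (0:ℝ) 1) (hκ' : κ' ∈ Set.Ioo (0:ℝ) 1)
    (v : ℝ → ℝ) (hconc : ConcaveOn ℝ (Set.Ici 1) v)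
    (y d : ℝ) (hy : 1 < y)
    (hsupergrad : ∀ z, y ≤ z → v z ≤ v y + (z - y) * d)
    (hd1 : 1 < d) (hd2 : d ≤ 1 / (1 - κ')) :
    ∀ ξ, κ / (1 - κ') * (y - 1) < ξ →
      v ((1 - κ) * y + (1 - κ') * ξ + κ) - ξ + κ * (y - 1)
          ≤ v y - κ * κ' / (1 - κ') * (y - 1) ∧
        v y - κ * κ' / (1 - κ') * (y - 1) < v y := by
  intro ξ hξ
  obtain ⟨hκ0, hκ1⟩ := hκ
  obtain ⟨hκ'0, hκ'1⟩ := hκ'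
  have h1κ' : (0:ℝ) < 1 - κ' := by linarith
  have hzy : y ≤ (1 - κ) * y + (1 - κ') * ξ + κ := by
    have : κ / (1 - κ') * (y - 1) * (1 - κ') = κ * (y - 1) := by
      field_simp
    nlinarith [mul_lt_mul_of_pos_right hξ h1κ']
  have hz := hsupergrad _ hzy
  have hd2' : (1 - κ') * d ≤ 1 := by
    rw [div_eq_inv_mul] at hd2
    rw [mul_one] at hd2
    calc (1 - κ') * d ≤ (1 - κ') * (1 - κ')⁻¹ := by
          exact mul_le_mul_of_nonneg_left hd2 (le_of_lt h1κ')
      _ = 1 := mul_inv_cancel₀ (ne_of_gt h1κ')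
  have hdiv : κ * κ' / (1 - κ') * (y - 1) * (1 - κ') = κ * κ' * (y - 1) := by
    field_simp
  constructor
  · nlinarith [mul_le_mul_of_nonneg_left (le_of_lt hξ) (sub_nonneg.mpr hd2'),
      mul_pos hκ0 (sub_pos.mpr hy), mul_lt_mul_of_pos_right hξ h1κ']
  · have : 0 < κ * κ' / (1 - κ') * (y - 1) :=
      mul_pos (div_pos (mul_pos hκ0 hκ'0) h1κ') (sub_pos.mpr hy)
    linarith
end

section
/- Let v : [1, ∞) → ℝ be concave with right derivative D⁺v(y) = 1 at some y > 1 (so v(z) ≤ v(y) + (z - y) for z ≥ y). Then with κ, κ' ∈ (0,1), Hv(y) ≤ v(y) - (κκ'/(1-κ'))(y-1) < v(y). Hence the issuance region and the dividend region are disjoint. -/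
/-- If `v` is concave on `[1, ∞)` and has right slope `1` at some `y > 1` (so
`v(z) ≤ v(y) + (z - y)` for `z ≥ y`, as in the dividend region), then
`Hv(y) ≤ v(y) - (κκ'/(1-κ'))(y-1) < v(y)`: issuance and dividend regions are disjoint. -/
theorem issuance_dividend_disjoint
    (κ κ' : ℝ) (hκ : κ ∈ Set.Ioo (0:ℝ) 1) (hκ' : κ' ∈ Set.Ioo (0:ℝ) 1)
    (v : ℝ → ℝ) (hconc : ConcaveOn ℝ (Set.Ici 1) v)
    (y : ℝ) (hy : 1 < y)
    (hslope : ∀ z, y ≤ z → v z ≤ v y + (z - y))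
    (Hv : ℝ → ℝ)
    (hH : ∀ w, Hv w = sSup {z | ∃ ξ, κ / (1 - κ') * (w - 1) < ξ ∧
        z = v ((1 - κ) * w + (1 - κ') * ξ + κ) - ξ + κ * (w - 1)}) :
    Hv y ≤ v y - κ * κ' / (1 - κ') * (y - 1) ∧
      v y - κ * κ' / (1 - κ') * (y - 1) < v y := by
  obtain ⟨hκ0, hκ1⟩ := hκ
  obtain ⟨hκ'0, hκ'1⟩ := hκ'
  have h1κ' : (0:ℝ) < 1 - κ' := by linarith
  have hy1 : (0:ℝ) < y - 1 := by linarith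
  constructor
  · rw [hH y]
    apply csSup_le
    · refine ⟨v ((1 - κ) * y + (1 - κ') * (κ / (1 - κ') * (y - 1) + 1) + κ)
        - (κ / (1 - κ') * (y - 1) + 1) + κ * (y - 1),
        κ / (1 - κ') * (y - 1) + 1, by linarith, rfl⟩
    · rintro z ⟨ξ, hξ, rfl⟩
      set w := (1 - κ) * y + (1 - κ') * ξ + κ with hw
      have hwy : y ≤ w := by
        have : κ / (1 - κ') * (y - 1) * (1 - κ') = κ * (y - 1) := by
          field_simp
        nlinarith [mul_lt_mul_of_pos_right hξ h1κ']
      have hv := hslope w hwy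
      have hξlb : κ / (1 - κ') * (y - 1) ≤ ξ := le_of_lt hξ
      have : v w - ξ + κ * (y - 1) ≤ v y - κ' * ξ := by
        have hwny : w - y = (1 - κ') * ξ - κ * (y - 1) := by rw [hw]; ring_nf
        nlinarith
      have hκ'ξ : κ' * (κ / (1 - κ') * (y - 1)) ≤ κ' * ξ :=
        mul_le_mul_of_nonneg_left hξlb (le_of_lt hκ'0)
      have : κ' * (κ / (1 - κ') * (y - 1)) = κ * κ' / (1 - κ') * (y - 1) := by
        ring
      linarith
  · have : 0 < κ * κ' / (1 - κ') * (y - 1) := by positivity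
    linarith
end

section
/- Suppose v : [1, ∞) → ℝ is concave, nondecreasing, and satisfies v'(y) ≥ 1 wherever differentiable, and suppose ρ > r + (μ-r)⁺/a₁ and ρ > r + (μ-r)⁺/a₃. Define ψ(y) = ρ_L·v(y) + (μ_L - μ*(y))·y - γ where ρ_L = ρ - μ_L and μ*(y) = r + π̄(y)(μ-r)⁺. Then on each of the two regimes of π̄, ψ is nondecreasing (indeed its derivative is bounded below by ρ - r - (μ-r)⁺/a₁ ≥ 0 or ρ - r - (μ-r)⁺/a₃ ≥ 0 respectively). -/
open Set

/-- Key lemma: a concave, nondecreasing function on `[1,∞)` whose derivative is `≥ 1`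
wherever it exists grows at least linearly with slope 1. -/
lemma v_growth (v : ℝ → ℝ) (hconc : ConcaveOn ℝ (Set.Ici 1) v)
    (hmono : MonotoneOn v (Set.Ici 1))
    (hder : ∀ y, 1 ≤ y → ∀ d, HasDerivAt v d y → 1 ≤ d)
    {x y : ℝ} (hx : (1:ℝ) ≤ x) (hxy : x < y) : y - x ≤ v y - v x := by
  have hy1 : (1:ℝ) ≤ y := le_of_lt (lt_of_le_of_lt hx hxy)
  -- extend v to a monotone function on ℝ
  set w : ℝ → ℝ := fun t => v (max t 1) with hw
  have hwmono : Monotone w := fun s t hst =>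
    hmono (le_max_right s 1) (le_max_right t 1) (max_le_max hst le_rfl)
  have hae := hwmono.ae_differentiableAt
  -- find a differentiability point z > y
  have hne : ¬ (Set.Ioi y ⊆ {t | ¬ DifferentiableAt ℝ w t}) := by
    intro hsub
    have h0 : MeasureTheory.volume (Set.Ioi y) = 0 :=
      MeasureTheory.measure_mono_null hsub hae
    rw [Real.volume_Ioi] at h0
    exact ENNReal.top_ne_zero h0
  rw [Set.not_subset] at hne
  obtain ⟨z, hzy, hzdiff⟩ := hne
  simp only [Set.mem_setOf_eq, not_not] at hzdiff
  have hz1 : (1:ℝ) < z := lt_of_le_of_lt hy1 hzy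
  -- near z, w = v
  have heq : w =ᶠ[nhds z] v := by
    filter_upwards [eventually_gt_nhds hz1] with t ht
    simp [hw, max_eq_left ht.le]
  have hvdiff : DifferentiableAt ℝ v z := (Filter.EventuallyEq.differentiableAt_iff heq).mp hzdiff
  have hderz : HasDerivAt v (deriv v z) z := hvdiff.hasDerivAt
  have h1d : (1:ℝ) ≤ deriv v z := hder z (le_of_lt hz1) _ hderz
  -- deriv at right endpoint ≤ slope over [y,z]
  have h2 : deriv v z ≤ slope v y z :=
    hconc.le_slope_of_hasDerivAt hy1 (le_of_lt hz1) hzy hderz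
  -- slope over [y,z] ≤ slope over [x,y]
  have h3 : slope v y z ≤ slope v x y := by
    rw [slope_def_field, slope_def_field]
    exact hconc.slope_anti_adjacent hx (le_of_lt hz1) hxy hzy
  have h4 : (1:ℝ) ≤ slope v x y := le_trans h1d (le_trans h2 h3)
  rw [slope_def_field] at h4
  have hxy' : (0:ℝ) < y - x := sub_pos.mpr hxy
  have h5 := (le_div_iff₀ hxy').mp h4
  linarith

/-- Monotonicity of `ψ(y) = ρ_L v(y) + (μ_L - μ*(y))y - γ` on each regime of the
investment cap. If `v` is concave, nondecreasing, with derivative `≥ 1` wherever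
differentiable, and `ρ > r + (μ-r)⁺/a₁`, `ρ > r + (μ-r)⁺/a₃`, then `ψ` is
nondecreasing on the solvency regime `{y ≥ 1 : y π̄(y) = (y-1)/a₁}` and on the
liquidity regime `{y ≥ 1 : y π̄(y) = (y-a₂)/a₃}`. -/
theorem psi_monotone_on_regimes
    (a₁ a₂ a₃ r μ ρ μL γ : ℝ)
    (ha₁ : a₁ ∈ Set.Ioo (0:ℝ) 1) (ha₂ : a₂ ∈ Set.Ioo (0:ℝ) 1) (ha₃ : a₃ ∈ Set.Ioo (0:ℝ) 1)
    (hρL : 0 < ρ - μL)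
    (hρ1 : r + max (μ - r) 0 / a₁ < ρ) (hρ3 : r + max (μ - r) 0 / a₃ < ρ)
    (pibar : ℝ → ℝ)
    (hpibar : ∀ y, pibar y = min ((1/a₁) * (1 - 1/y)) ((1/a₃) * (1 - a₂/y)))
    (v : ℝ → ℝ) (hconc : ConcaveOn ℝ (Set.Ici 1) v) (hmono : MonotoneOn v (Set.Ici 1))
    (hder : ∀ y, 1 ≤ y → ∀ d, HasDerivAt v d y → 1 ≤ d)
    (ψ : ℝ → ℝ)
    (hψ : ∀ y, ψ y = (ρ - μL) * v y + (μL - (r + pibar y * max (μ - r) 0)) * y - γ) :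
    MonotoneOn ψ {y | 1 ≤ y ∧ y * pibar y = (y - 1) / a₁} ∧
      MonotoneOn ψ {y | 1 ≤ y ∧ y * pibar y = (y - a₂) / a₃} := by
  set M := max (μ - r) 0 with hM
  have hM0 : 0 ≤ M := le_max_right _ _
  -- a generic regime lemma
  have key : ∀ (b c : ℝ), 0 < b → r + M / b < ρ →
      MonotoneOn ψ {y | 1 ≤ y ∧ y * pibar y = (y - c) / b} := by
    intro b c hb hρb x hxmem y hymem hxy
    obtain ⟨hx1, hxr⟩ := hxmem
    obtain ⟨hy1, hyr⟩ := hymem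
    rcases eq_or_lt_of_le hxy with rfl | hlt
    · exact le_rfl
    have hv : y - x ≤ v y - v x := v_growth v hconc hmono hder hx1 hlt
    rw [hψ x, hψ y]
    have hx' : pibar x * M * x = (x - c) / b * M := by
      rw [show pibar x * M * x = (x * pibar x) * M by ring, hxr]
    have hy' : pibar y * M * y = (y - c) / b * M := by
      rw [show pibar y * M * y = (y * pibar y) * M by ring, hyr]
    have e1 : (μL - (r + pibar x * M)) * x = (μL - r) * x - (x - c) / b * M := by
      rw [← hx']; ring
    have e2 : (μL - (r + pibar y * M)) * y = (μL - r) * y - (y - c) / b * M := by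
      rw [← hy']; ring
    rw [e1, e2]
    have hMb : M / b * (y - x) ≤ (ρ - r) * (y - x) := by
      have : M / b ≤ ρ - r := by linarith
      exact mul_le_mul_of_nonneg_right this (by linarith)
    have hsub : (y - c) / b * M - (x - c) / b * M = M / b * (y - x) := by
      field_simp; ring
    nlinarith [mul_le_mul_of_nonneg_left hv (le_of_lt hρL)]
  exact ⟨key a₁ 1 ha₁.1 hρ1, key a₃ a₂ ha₃.1 hρ3⟩
end

section
/- Let (y₁, Z¹, U¹) and (y₂, Z², U²) be two admissible state-control trajectories of the affine controlled dynamics dY_t = ((r-μ_L)Y_t + (μ-r)U_t + γ)dt + σU_t dB_t + σ_L(1-Y_t)dW_t - dZ_t subject to 0 ≤ U_t ≤ ū(Y_t) with ū concave, and let λ ∈ [0,1]. Then Y^λ := λY¹ + (1-λ)Y², with control (λZ¹ + (1-λ)Z², λU¹ + (1-λ)U²) and initial point λy₁ + (1-λ)y₂, solves the same dynamics and satisfies the constraint 0 ≤ U^λ_t ≤ ū(Y^λ_t). -/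
/-- Convexity lemma for the controlled dynamics: the drift and diffusion
coefficients are affine in `(Y, U)`, so a convex combination of two admissible
state-control trajectories (with the same driving noise, modeled by linear
integration operators `IB`, `IW`) solves the same dynamics; and since the
constraint function `ū` is concave, the combined control remains admissible. -/
theorem convex_combination_admissible
    (a₁ a₂ a₃ r μL μ γ σ σL : ℝ)
    (ubar : ℝ → ℝ) (hubar : ∀ y, ubar y = min ((y - 1) / a₁) ((y - a₂) / a₃))
    (hconc : ConcaveOn ℝ (Set.Ici 1) ubar)
    (IB IW : (ℝ → ℝ) →ₗ[ℝ] (ℝ → ℝ))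
    (Y₁ Y₂ U₁ U₂ Z₁ Z₂ : ℝ → ℝ) (y₁ y₂ θ : ℝ) (hθ : θ ∈ Set.Icc (0:ℝ) 1)
    (hstate₁ : ∀ t, 1 ≤ Y₁ t) (hstate₂ : ∀ t, 1 ≤ Y₂ t)
    (hint₁ : ∀ t, IntervalIntegrable (fun s => (r - μL) * Y₁ s + (μ - r) * U₁ s + γ)
      MeasureTheory.volume 0 t)
    (hint₂ : ∀ t, IntervalIntegrable (fun s => (r - μL) * Y₂ s + (μ - r) * U₂ s + γ)
      MeasureTheory.volume 0 t)
    (hdyn₁ : ∀ t, Y₁ t = y₁ + (∫ s in (0:ℝ)..t, ((r - μL) * Y₁ s + (μ - r) * U₁ s + γ))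
        + IB (fun s => σ * U₁ s) t + IW (fun s => σL * (1 - Y₁ s)) t - Z₁ t)
    (hdyn₂ : ∀ t, Y₂ t = y₂ + (∫ s in (0:ℝ)..t, ((r - μL) * Y₂ s + (μ - r) * U₂ s + γ))
        + IB (fun s => σ * U₂ s) t + IW (fun s => σL * (1 - Y₂ s)) t - Z₂ t)
    (hcon₁ : ∀ t, 0 ≤ U₁ t ∧ U₁ t ≤ ubar (Y₁ t))
    (hcon₂ : ∀ t, 0 ≤ U₂ t ∧ U₂ t ≤ ubar (Y₂ t)) :
    (∀ t, θ * Y₁ t + (1 - θ) * Y₂ t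
        = (θ * y₁ + (1 - θ) * y₂)
          + (∫ s in (0:ℝ)..t, ((r - μL) * (θ * Y₁ s + (1 - θ) * Y₂ s)
              + (μ - r) * (θ * U₁ s + (1 - θ) * U₂ s) + γ))
          + IB (fun s => σ * (θ * U₁ s + (1 - θ) * U₂ s)) t
          + IW (fun s => σL * (1 - (θ * Y₁ s + (1 - θ) * Y₂ s))) t
          - (θ * Z₁ t + (1 - θ) * Z₂ t)) ∧
      ∀ t, 0 ≤ θ * U₁ t + (1 - θ) * U₂ t ∧
        θ * U₁ t + (1 - θ) * U₂ t ≤ ubar (θ * Y₁ t + (1 - θ) * Y₂ t) := by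
  obtain ⟨hθ0, hθ1⟩ := hθ
  constructor
  · intro t
    have hIB : IB (fun s => σ * (θ * U₁ s + (1 - θ) * U₂ s)) t
        = θ * IB (fun s => σ * U₁ s) t + (1 - θ) * IB (fun s => σ * U₂ s) t := by
      have : (fun s => σ * (θ * U₁ s + (1 - θ) * U₂ s))
          = θ • (fun s => σ * U₁ s) + (1 - θ) • (fun s => σ * U₂ s) := by
        funext s; simp [Pi.add_apply, smul_eq_mul]; ring
      rw [this, map_add, map_smul, map_smul]; simp [smul_eq_mul]
    have hIW : IW (fun s => σL * (1 - (θ * Y₁ s + (1 - θ) * Y₂ s))) t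
        = θ * IW (fun s => σL * (1 - Y₁ s)) t + (1 - θ) * IW (fun s => σL * (1 - Y₂ s)) t := by
      have : (fun s => σL * (1 - (θ * Y₁ s + (1 - θ) * Y₂ s)))
          = θ • (fun s => σL * (1 - Y₁ s)) + (1 - θ) • (fun s => σL * (1 - Y₂ s)) := by
        funext s; simp [Pi.add_apply, smul_eq_mul]; ring
      rw [this, map_add, map_smul, map_smul]; simp [smul_eq_mul]
    have hInt : (∫ s in (0:ℝ)..t, ((r - μL) * (θ * Y₁ s + (1 - θ) * Y₂ s)
          + (μ - r) * (θ * U₁ s + (1 - θ) * U₂ s) + γ))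
        = θ * (∫ s in (0:ℝ)..t, ((r - μL) * Y₁ s + (μ - r) * U₁ s + γ))
          + (1 - θ) * (∫ s in (0:ℝ)..t, ((r - μL) * Y₂ s + (μ - r) * U₂ s + γ)) := by
      rw [← intervalIntegral.integral_const_mul, ← intervalIntegral.integral_const_mul,
        ← intervalIntegral.integral_add ((hint₁ t).const_mul θ) ((hint₂ t).const_mul (1 - θ))]
      apply intervalIntegral.integral_congr
      intro s _
      simp [smul_eq_mul]; ring
    rw [hIB, hIW, hInt, hdyn₁ t, hdyn₂ t]
    ring
  · intro t
    obtain ⟨h10, h1u⟩ := hcon₁ t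
    obtain ⟨h20, h2u⟩ := hcon₂ t
    constructor
    · exact add_nonneg (mul_nonneg hθ0 h10) (mul_nonneg (by linarith) h20)
    · calc θ * U₁ t + (1 - θ) * U₂ t
          ≤ θ * ubar (Y₁ t) + (1 - θ) * ubar (Y₂ t) := by
            gcongr <;> linarith
        _ ≤ ubar (θ * Y₁ t + (1 - θ) * Y₂ t) := by
            have := hconc.2 (hstate₁ t) (hstate₂ t) hθ0 (show (0:ℝ) ≤ 1 - θ by linarith) (by ring)
            simpa [smul_eq_mul] using this
end
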